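/- Let ε > 0 and let m : (−ε,ε) → ℝ be differentiable with m'(t) = −c(t)·H(t)·(P(t) + 2H'(t)θ(t)) where c(t) > 0, P(t) ≥ 0, θ(t) ≤ 0, H(t) > 0 on (−ε,0), H(t) < 0 on (0,ε), H'(t) ≤ 0. If m(t) ≤ m(0) for all t, then H(t)·P(t) = 0 and H(t)·H'(t)·θ(t) = 0 for all t ∈ (−ε,ε). -/
import Mathlib


theorem rigidity_sign_argument (ε : ℝ) (hε : 0 < ε)
    (m c P θ H H' : ℝ → ℝ)
    (hm : ∀ t ∈ Set.Ioo (-ε) ε,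
      HasDerivAt m (-(c t) * H t * (P t + 2 * H' t * θ t)) t)
    (hc : ∀ t ∈ Set.Ioo (-ε) ε, 0 < c t)
    (hP : ∀ t ∈ Set.Ioo (-ε) ε, 0 ≤ P t)
    (hθ : ∀ t ∈ Set.Ioo (-ε) ε, θ t ≤ 0)
    (hHneg : ∀ t ∈ Set.Ioo (-ε) (0 : ℝ), 0 < H t)
    (hHpos : ∀ t ∈ Set.Ioo (0 : ℝ) ε, H t < 0)
    (hH' : ∀ t ∈ Set.Ioo (-ε) ε, H' t ≤ 0)
    (hmax : ∀ t ∈ Set.Ioo (-ε) ε, m t ≤ m 0) :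
    ∀ t ∈ Set.Ioo (-ε) ε, H t * P t = 0 ∧ H t * H' t * θ t = 0 := by
  have hsum : ∀ t ∈ Set.Ioo (-ε) ε, 0 ≤ P t + 2 * H' t * θ t := by
    intro t ht
    have h1 : 0 ≤ H' t * θ t := by nlinarith [hH' t ht, hθ t ht]
    nlinarith [hP t ht]

  have hderiv : ∀ t ∈ Set.Ioo (-ε) ε,
      deriv m t = -(c t) * H t * (P t + 2 * H' t * θ t) := fun t ht => (hm t ht).deriv
  have hcont : ContinuousOn m (Set.Ioo (-ε) ε) := fun t ht =>
    (hm t ht).continuousAt.continuousWithinAt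
  -- m is constant equal to m 0 on the interval
  have heq : ∀ t ∈ Set.Ioo (-ε) ε, m t = m 0 := by
    intro t ht
    rcases lt_trichotomy t 0 with h | h | h
    · have hsub : Set.Icc t 0 ⊆ Set.Ioo (-ε) ε := fun x hx =>
        ⟨lt_of_lt_of_le ht.1 hx.1, lt_of_le_of_lt hx.2 hε⟩
      have hanti : AntitoneOn m (Set.Icc t 0) := by
        apply antitoneOn_of_deriv_nonpos (convex_Icc t 0) (hcont.mono hsub)
        · intro x hx
          rw [interior_Icc] at hx
          exact ((hm x (hsub (Set.Ioo_subset_Icc_self hx))).differentiableAt.differentiableWithinAt)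
        intro x hx
        rw [interior_Icc] at hx
        have hx' : x ∈ Set.Ioo (-ε) ε := hsub (Set.Ioo_subset_Icc_self hx)
        rw [hderiv x hx']
        have hH : 0 < H x := hHneg x ⟨hx'.1, hx.2⟩
        have := hsum x hx'
        nlinarith [mul_nonneg (mul_nonneg (hc x hx').le hH.le) this]
      have h1 : m 0 ≤ m t := hanti ⟨le_refl t, h.le⟩ ⟨h.le, le_refl 0⟩ h.le
      exact le_antisymm (hmax t ht) h1
    · rw [h]
    · have hsub : Set.Icc 0 t ⊆ Set.Ioo (-ε) ε := fun x hx =>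
        ⟨lt_of_lt_of_le (neg_neg_of_pos hε) hx.1, lt_of_le_of_lt hx.2 ht.2⟩
      have hmono : MonotoneOn m (Set.Icc 0 t) := by
        apply monotoneOn_of_deriv_nonneg (convex_Icc 0 t) (hcont.mono hsub)
        · intro x hx
          rw [interior_Icc] at hx
          exact ((hm x (hsub (Set.Ioo_subset_Icc_self hx))).differentiableAt.differentiableWithinAt)
        intro x hx
        rw [interior_Icc] at hx
        have hx' : x ∈ Set.Ioo (-ε) ε := hsub (Set.Ioo_subset_Icc_self hx)
        rw [hderiv x hx']
        have hH : H x < 0 := hHpos x ⟨hx.1, hx'.2⟩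
        have := hsum x hx'
        nlinarith [mul_nonneg (mul_nonneg (hc x hx').le (neg_nonneg.mpr hH.le)) this]
      have h1 : m 0 ≤ m t := hmono ⟨le_refl 0, h.le⟩ ⟨h.le, le_refl t⟩ h.le
      exact le_antisymm (hmax t ht) h1
  intro t ht
  have hloc : IsLocalMax m t := by
    filter_upwards [Ioo_mem_nhds ht.1 ht.2] with s hs
    exact (hmax s hs).trans_eq (heq t ht).symm
  have h0 : -(c t) * H t * (P t + 2 * H' t * θ t) = 0 :=
    hloc.hasDerivAt_eq_zero (hm t ht)
  have hc' := hc t ht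
  have hHsum : H t * (P t + 2 * H' t * θ t) = 0 := by
    have : c t * (H t * (P t + 2 * H' t * θ t)) = 0 := by ring_nf; nlinarith [h0]
    exact (mul_eq_zero.mp this).resolve_left hc'.ne'
  rcases eq_or_ne (H t) 0 with hH | hH
  · simp [hH]
  · have hsum0 : P t + 2 * H' t * θ t = 0 := (mul_eq_zero.mp hHsum).resolve_left hH
    have h1 : 0 ≤ H' t * θ t := by nlinarith [hH' t ht, hθ t ht]
    have hP0 : P t = 0 := by nlinarith [hP t ht]
    have hθ0 : H' t * θ t = 0 := by nlinarith [hP t ht]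
    constructor
    · rw [hP0]; ring
    · rw [mul_assoc, hθ0]; ring
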